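/- Fix n ∈ ℕ. Suppose: (i) A_cl^k → 0 as k → ∞ (A_cl is Schur); (ii) the pair (C_cl, A_cl) is observable, i.e., for every x ∈ ℝ^{nx}, if C_cl A_cl^k x = 0 for all k ∈ ℕ then x = 0; (iii) Y_cl is compact and each Ω_i is compact; (iv) Ỹ_n is nonempty and there exists ε_n > 0 such that Ỹ_n ⊕ ε_n·𝔹 ⊆ Y_{cl,n,k} for every k ∈ ℕ, where 𝔹 is the closed Euclidean unit ball of ℝ^{ny}. Then there exists k*(n) ∈ ℕ such that Õ_{∞,n} = {(v, x̂) ∈ ℝ^{nv} × ℝ^{nx} : H^y_∞ v ∈ Ỹ_n and H^y_k v + C_cl A_cl^k x̂ ∈ Y_{cl,n,k} for all k = 0, 1, …, k*(n)}; i.e., Õ_{∞,n} is finitely determined. -/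

import Mathlib

open Matrix Pointwise Filter

/-- Pontryagin difference of sets: `A ⊖ B = {z | z + v ∈ A for all v ∈ B}`. -/
def pDiff {d : ℕ} (A B : Set (Fin d → ℝ)) : Set (Fin d → ℝ) :=
  {z | ∀ v ∈ B, z + v ∈ A}

/-- `ℰˣ(n,k) = ⊕_{i=0}^{k-1} (A_cl^{k-1-i} B_w)·Ω_{n+i}` (Minkowski sum of linear
images), with the empty sum `ℰˣ(n,0) = {0}`. -/
def calEx {nx ne : ℕ} (Acl : Matrix (Fin nx) (Fin nx) ℝ)
    (Bw : Matrix (Fin nx) (Fin ne) ℝ) (Ω : ℕ → Set (Fin ne → ℝ)) (n k : ℕ) :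
    Set (Fin nx → ℝ) :=
  ∑ i ∈ Finset.range k, (Acl ^ (k - 1 - i) * Bw).mulVec '' Ω (n + i)

/-- `ℰʸ(n,k) = D_w·Ω_{n+k} ⊕ C_cl·ℰˣ(n,k)`. -/
def calEy {nx ne ny : ℕ} (Acl : Matrix (Fin nx) (Fin nx) ℝ)
    (Bw : Matrix (Fin nx) (Fin ne) ℝ) (Ccl : Matrix (Fin ny) (Fin nx) ℝ)
    (Dw : Matrix (Fin ny) (Fin ne) ℝ) (Ω : ℕ → Set (Fin ne → ℝ)) (n k : ℕ) :
    Set (Fin ny → ℝ) :=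
  Dw.mulVec '' Ω (n + k) + Ccl.mulVec '' calEx Acl Bw Ω n k

/-- `Y_{cl,n,k} = Y_cl ⊖ ℰʸ(n,k)`. -/
def Yclset {nx ne ny : ℕ} (Acl : Matrix (Fin nx) (Fin nx) ℝ)
    (Bw : Matrix (Fin nx) (Fin ne) ℝ) (Ccl : Matrix (Fin ny) (Fin nx) ℝ)
    (Dw : Matrix (Fin ny) (Fin ne) ℝ) (Ycl : Set (Fin ny → ℝ))
    (Ω : ℕ → Set (Fin ne → ℝ)) (n k : ℕ) : Set (Fin ny → ℝ) :=
  pDiff Ycl (calEy Acl Bw Ccl Dw Ω n k)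

/-- `H^y_k = D_cl + C_cl (I − A_cl)⁻¹ (I − A_cl^k) B_cl`. -/
noncomputable def Hy {nx nv ny : ℕ} (Acl : Matrix (Fin nx) (Fin nx) ℝ)
    (Bcl : Matrix (Fin nx) (Fin nv) ℝ) (Ccl : Matrix (Fin ny) (Fin nx) ℝ)
    (Dcl : Matrix (Fin ny) (Fin nv) ℝ) (k : ℕ) : Matrix (Fin ny) (Fin nv) ℝ :=
  Dcl + Ccl * (1 - Acl)⁻¹ * (1 - Acl ^ k) * Bcl

/-- `H^y_∞ = D_cl + C_cl (I − A_cl)⁻¹ B_cl`. -/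
noncomputable def Hyinf {nx nv ny : ℕ} (Acl : Matrix (Fin nx) (Fin nx) ℝ)
    (Bcl : Matrix (Fin nx) (Fin nv) ℝ) (Ccl : Matrix (Fin ny) (Fin nx) ℝ)
    (Dcl : Matrix (Fin ny) (Fin nv) ℝ) : Matrix (Fin ny) (Fin nv) ℝ :=
  Dcl + Ccl * (1 - Acl)⁻¹ * Bcl

/-- `Õ_{∞,n} = {(v, x̂) : H^y_∞ v ∈ Ỹ_n and H^y_k v + C_cl A_cl^k x̂ ∈ Y_{cl,n,k} ∀k}`. -/
def Otilde {nx nv ne ny : ℕ} (Acl : Matrix (Fin nx) (Fin nx) ℝ)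
    (Bcl : Matrix (Fin nx) (Fin nv) ℝ) (Bw : Matrix (Fin nx) (Fin ne) ℝ)
    (Ccl : Matrix (Fin ny) (Fin nx) ℝ) (Dcl : Matrix (Fin ny) (Fin nv) ℝ)
    (Dw : Matrix (Fin ny) (Fin ne) ℝ) (Ycl : Set (Fin ny → ℝ))
    (Ω : ℕ → Set (Fin ne → ℝ)) (Ytil : ℕ → Set (Fin ny → ℝ)) (n : ℕ) :
    Set ((Fin nv → ℝ) × (Fin nx → ℝ)) :=
  {p | (Hyinf Acl Bcl Ccl Dcl).mulVec p.1 ∈ Ytil n ∧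
       ∀ k : ℕ, (Hy Acl Bcl Ccl Dcl k).mulVec p.1 + (Ccl * Acl ^ k).mulVec p.2 ∈
         Yclset Acl Bw Ccl Dw Ycl Ω n k}

/-- The closed Euclidean unit ball of `ℝ^d` (viewed as a set of plain vectors). -/
def euclUnitBall (d : ℕ) : Set (Fin d → ℝ) :=
  {y | ‖(EuclideanSpace.equiv (Fin d) ℝ).symm y‖ ≤ 1}



/-- A nonempty finite Minkowski sum of sets forces each summand nonempty. -/
lemma setSum_nonempty_of_mem {V : Type*} [AddCommMonoid V] (s : Finset ℕ) (f : ℕ → Set V)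
    (hx : (∑ i ∈ s, f i).Nonempty) : ∀ i ∈ s, (f i).Nonempty := by
  induction s using Finset.cons_induction with
  | empty => simp
  | cons a s ha ih =>
    rw [Finset.sum_cons] at hx
    obtain ⟨x, hx⟩ := hx
    rcases Set.mem_add.mp hx with ⟨u, hu, v, hv, rfl⟩
    intro i hi
    rcases Finset.mem_cons.mp hi with rfl | hi
    · exact ⟨u, hu⟩
    · exact ih ⟨v, hv⟩ i hi

lemma setSum_nonempty {V : Type*} [AddCommMonoid V] (s : Finset ℕ) (f : ℕ → Set V)
    (h : ∀ i ∈ s, (f i).Nonempty) : (∑ i ∈ s, f i).Nonempty := by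
  induction s using Finset.cons_induction with
  | empty => exact ⟨0, by simp [Set.mem_zero]⟩
  | cons a s ha ih =>
    rw [Finset.sum_cons]
    obtain ⟨u, hu⟩ := h a (Finset.mem_cons_self _ _)
    obtain ⟨v, hv⟩ := ih fun i hi => h i (Finset.mem_cons_of_mem hi)
    exact ⟨u + v, Set.add_mem_add hu hv⟩

/-- Entrywise ℓ¹ "norm" of a matrix. -/
noncomputable def mnorm {m k : ℕ} (M : Matrix (Fin m) (Fin k) ℝ) : ℝ :=
  ∑ i, ∑ j, |M i j|

lemma mnorm_nonneg {m k : ℕ} (M : Matrix (Fin m) (Fin k) ℝ) : 0 ≤ mnorm M := by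
  unfold mnorm; positivity

lemma mnorm_continuous {m k : ℕ} : Continuous (mnorm (m := m) (k := k)) := by
  unfold mnorm
  exact continuous_finset_sum _ fun i _ => continuous_finset_sum _ fun j _ =>
    ((continuous_apply j).comp (continuous_apply i)).abs

lemma mnorm_zero {m k : ℕ} : mnorm (0 : Matrix (Fin m) (Fin k) ℝ) = 0 := by
  simp [mnorm]

lemma mulVec_norm_le {m k : ℕ} (M : Matrix (Fin m) (Fin k) ℝ) (z : Fin k → ℝ) :
    ‖M.mulVec z‖ ≤ mnorm M * ‖z‖ := by
  have hnn : (0:ℝ) ≤ mnorm M * ‖z‖ := mul_nonneg (mnorm_nonneg M) (norm_nonneg z)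
  rw [pi_norm_le_iff_of_nonneg hnn]
  intro i
  calc ‖(M.mulVec z) i‖ = |∑ j, M i j * z j| := rfl
    _ ≤ ∑ j, |M i j * z j| := Finset.abs_sum_le_sum_abs _ _
    _ ≤ ∑ j, |M i j| * ‖z‖ := by
        refine Finset.sum_le_sum fun j _ => ?_
        rw [abs_mul]
        exact mul_le_mul_of_nonneg_left (norm_le_pi_norm z j) (abs_nonneg _)
    _ = (∑ j, |M i j|) * ‖z‖ := by rw [Finset.sum_mul]
    _ ≤ mnorm M * ‖z‖ := by
        refine mul_le_mul_of_nonneg_right ?_ (norm_nonneg _)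
        exact Finset.single_le_sum (f := fun i => ∑ j, |M i j|)
          (fun i _ => by positivity) (Finset.mem_univ i)

lemma eucl_norm_le {d : ℕ} (y : Fin d → ℝ) :
    ‖(EuclideanSpace.equiv (Fin d) ℝ).symm y‖ ≤ Real.sqrt d * ‖y‖ := by
  rw [EuclideanSpace.norm_eq]
  have h1 : ∀ i : Fin d, ‖((EuclideanSpace.equiv (Fin d) ℝ).symm y) i‖ = ‖y i‖ := fun i => rfl
  calc Real.sqrt (∑ i, ‖((EuclideanSpace.equiv (Fin d) ℝ).symm y) i‖ ^ 2)
      ≤ Real.sqrt (∑ _i : Fin d, ‖y‖ ^ 2) := by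
        apply Real.sqrt_le_sqrt
        refine Finset.sum_le_sum fun i _ => ?_
        rw [h1 i]
        exact pow_le_pow_left₀ (norm_nonneg _) (norm_le_pi_norm y i) 2
    _ = Real.sqrt d * ‖y‖ := by
        rw [Finset.sum_const, Finset.card_univ, Fintype.card_fin, nsmul_eq_mul,
          Real.sqrt_mul (by positivity), Real.sqrt_sq (norm_nonneg _)]

private lemma key_id {nx nv ny : ℕ} (Acl : Matrix (Fin nx) (Fin nx) ℝ)
    (Bcl : Matrix (Fin nx) (Fin nv) ℝ) (Ccl : Matrix (Fin ny) (Fin nx) ℝ)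
    (Dcl : Matrix (Fin ny) (Fin nv) ℝ) (hInv : IsUnit (1 - Acl)) (k : ℕ)
    (v : Fin nv → ℝ) (xh : Fin nx → ℝ) :
    (Hy Acl Bcl Ccl Dcl k).mulVec v + (Ccl * Acl ^ k).mulVec xh =
      (Hyinf Acl Bcl Ccl Dcl).mulVec v +
        (Ccl * Acl ^ k).mulVec (xh - ((1 - Acl)⁻¹ * Bcl).mulVec v) := by
  have hdet : IsUnit (1 - Acl).det := (Matrix.isUnit_iff_isUnit_det _).mp hInv
  have h1 : (1 - Acl) * (1 - Acl)⁻¹ = 1 := Matrix.mul_nonsing_inv _ hdet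
  have h2 : (1 - Acl)⁻¹ * (1 - Acl) = 1 := Matrix.nonsing_inv_mul _ hdet
  have hcomm : Acl * (1 - Acl) = (1 - Acl) * Acl := by noncomm_ring
  have hc : Acl * (1 - Acl)⁻¹ = (1 - Acl)⁻¹ * Acl := by
    have h3 : Acl * (1 - Acl)⁻¹ = (1 - Acl)⁻¹ * ((1 - Acl) * (Acl * (1 - Acl)⁻¹)) := by
      rw [← mul_assoc, h2, one_mul]
    rw [h3, ← mul_assoc (1 - Acl) Acl ((1 - Acl)⁻¹), ← hcomm,
      mul_assoc Acl (1 - Acl) ((1 - Acl)⁻¹), h1, mul_one]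
  have hck : Acl ^ k * (1 - Acl)⁻¹ = (1 - Acl)⁻¹ * Acl ^ k :=
    ((Commute.pow_left (hc : Commute Acl (1 - Acl)⁻¹) k)).eq
  set E := (1 - Acl)⁻¹ with hE
  have hm : Hy Acl Bcl Ccl Dcl k =
      Hyinf Acl Bcl Ccl Dcl - (Ccl * Acl ^ k) * (E * Bcl) := by
    unfold Hy Hyinf
    rw [← hE]
    have expand : Ccl * E * (1 - Acl ^ k) * Bcl
        = Ccl * E * Bcl - Ccl * (E * Acl ^ k) * Bcl := by
      rw [Matrix.mul_sub, Matrix.sub_mul, Matrix.mul_one, Matrix.mul_assoc Ccl E Bcl, Matrix.mul_assoc Ccl E (Acl ^ k)]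
    rw [expand, ← hck, ← Matrix.mul_assoc Ccl (Acl ^ k) E, Matrix.mul_assoc (Ccl * Acl ^ k) E Bcl]
    abel
  rw [hm, Matrix.sub_mulVec, Matrix.mulVec_sub, ← Matrix.mulVec_mulVec]
  abel

lemma obs_norm_bound {nx ny : ℕ} (Ccl : Matrix (Fin ny) (Fin nx) ℝ)
    (Acl : Matrix (Fin nx) (Fin nx) ℝ)
    (hObs : ∀ x : Fin nx → ℝ, (∀ k : ℕ, (Ccl * Acl ^ k).mulVec x = 0) → x = 0) :
    ∃ (t : Finset ℕ) (δ : ℝ), 0 < δ ∧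
      ∀ z : Fin nx → ℝ, δ * ‖z‖ ≤ ∑ k ∈ t, ‖(Ccl * Acl ^ k).mulVec z‖ := by
  rcases Nat.eq_zero_or_pos nx with h0 | h0
  · subst h0
    refine ⟨∅, 1, one_pos, fun z => ?_⟩
    have hz : z = 0 := Subsingleton.elim z 0
    simp [hz]
  · haveI : Nonempty (Fin nx) := Fin.pos_iff_nonempty.mp h0
    set S := Metric.sphere (0 : Fin nx → ℝ) 1 with hS
    have hScomp : IsCompact S := isCompact_sphere _ _
    have hcont : ∀ k : ℕ, Continuous fun z : Fin nx → ℝ => (Ccl * Acl ^ k).mulVec z := by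
      intro k
      have := LinearMap.continuous_of_finiteDimensional (Matrix.mulVecLin (Ccl * Acl ^ k))
      exact this
    set U : ℕ → Set (Fin nx → ℝ) := fun k => {z | (Ccl * Acl ^ k).mulVec z ≠ 0} with hU
    have hUopen : ∀ k, IsOpen (U k) := fun k =>
      (isClosed_singleton.preimage (hcont k)).isOpen_compl
    have hcover : S ⊆ ⋃ k, U k := by
      intro z hz
      by_contra hzn
      simp only [Set.mem_iUnion, hU, Set.mem_setOf_eq, not_exists, not_not] at hzn
      have hz0 : z = 0 := hObs z hzn
      rw [hS, mem_sphere_zero_iff_norm, hz0, norm_zero] at hz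
      exact one_ne_zero hz.symm
    obtain ⟨t, ht⟩ := hScomp.elim_finite_subcover U hUopen hcover
    set F : (Fin nx → ℝ) → ℝ := fun z => ∑ k ∈ t, ‖(Ccl * Acl ^ k).mulVec z‖ with hF
    have hFcont : Continuous F :=
      continuous_finset_sum _ fun k _ => (hcont k).norm
    have hSne : S.Nonempty := ⟨fun _ => 1, by
      rw [hS, mem_sphere_zero_iff_norm]; simp⟩
    obtain ⟨z₀, hz₀S, hmin⟩ := hScomp.exists_isMinOn hSne hFcont.continuousOn
    have hδ : 0 < F z₀ := by
      obtain ⟨k, hkt, hk⟩ := Set.mem_iUnion₂.mp (ht hz₀S)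
      refine Finset.sum_pos' (fun i _ => norm_nonneg _) ⟨k, hkt, ?_⟩
      exact norm_pos_iff.mpr hk
    refine ⟨t, F z₀, hδ, fun z => ?_⟩
    by_cases hz : z = 0
    · simp [hz, F]
    · have hc : 0 < ‖z‖ := norm_pos_iff.mpr hz
      have hu : ‖z‖⁻¹ • z ∈ S := by
        rw [hS, mem_sphere_zero_iff_norm, norm_smul, norm_inv, norm_norm,
          inv_mul_cancel₀ hc.ne']
      have hFu : F (‖z‖⁻¹ • z) = ‖z‖⁻¹ * F z := by
        rw [hF]
        simp only [Matrix.mulVec_smul, norm_smul, norm_inv, norm_norm]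
        rw [← Finset.mul_sum]
      have h : F z₀ ≤ ‖z‖⁻¹ * F z := hFu ▸ (hmin hu : F z₀ ≤ F (‖z‖⁻¹ • z))
      have : F z₀ ≤ F z / ‖z‖ := by rwa [inv_mul_eq_div] at h
      calc F z₀ * ‖z‖ ≤ (F z / ‖z‖) * ‖z‖ := mul_le_mul_of_nonneg_right this hc.le
        _ = F z := div_mul_cancel₀ _ hc.ne'

/-- Finite determination of `Õ_{∞,n}`. Suppose `A_cl^k → 0`
(Schur), `(C_cl, A_cl)` is observable, `Y_cl` is compact and each `Ω_i` is compact,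
`Ỹ_n` is nonempty, and there is `ε_n > 0` with `Ỹ_n ⊕ ε_n·𝔹 ⊆ Y_{cl,n,k}` for all
`k`, where `𝔹` is the closed Euclidean unit ball. Then there exists `k*(n)` such
that `Õ_{∞,n}` is cut out by the inequalities with `k ≤ k*(n)` only. -/
theorem stmt_14 {nx nv ne ny : ℕ} (Acl : Matrix (Fin nx) (Fin nx) ℝ)
    (Bcl : Matrix (Fin nx) (Fin nv) ℝ) (Bw : Matrix (Fin nx) (Fin ne) ℝ)
    (Ccl : Matrix (Fin ny) (Fin nx) ℝ) (Dcl : Matrix (Fin ny) (Fin nv) ℝ)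
    (Dw : Matrix (Fin ny) (Fin ne) ℝ) (Ycl : Set (Fin ny → ℝ))
    (Ω : ℕ → Set (Fin ne → ℝ)) (Ytil : ℕ → Set (Fin ny → ℝ))
    (hInv : IsUnit (1 - Acl))
    (n : ℕ)
    (hSchur : Filter.Tendsto (fun k : ℕ => Acl ^ k) Filter.atTop (nhds 0))
    (hObs : ∀ x : Fin nx → ℝ, (∀ k : ℕ, (Ccl * Acl ^ k).mulVec x = 0) → x = 0)
    (hYcl : IsCompact Ycl) (hΩ : ∀ i : ℕ, IsCompact (Ω i))
    (hYtilne : (Ytil n).Nonempty)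
    (heps : ∃ εn : ℝ, 0 < εn ∧ ∀ k : ℕ,
      Ytil n + εn • euclUnitBall ny ⊆ Yclset Acl Bw Ccl Dw Ycl Ω n k) :
    ∃ kstar : ℕ,
      Otilde Acl Bcl Bw Ccl Dcl Dw Ycl Ω Ytil n =
        {p : (Fin nv → ℝ) × (Fin nx → ℝ) |
          (Hyinf Acl Bcl Ccl Dcl).mulVec p.1 ∈ Ytil n ∧
          ∀ k : ℕ, k ≤ kstar →
            (Hy Acl Bcl Ccl Dcl k).mulVec p.1 + (Ccl * Acl ^ k).mulVec p.2 ∈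
              Yclset Acl Bw Ccl Dw Ycl Ω n k} := by
  obtain ⟨ε, hε, hsub⟩ := heps
  by_cases hΩne : ∀ i : ℕ, (Ω (n + i)).Nonempty
  · -- all disturbance sets nonempty
    obtain ⟨t, δ, hδ, hδbound⟩ := obs_norm_bound Ccl Acl hObs
    obtain ⟨CY, hCY⟩ := isBounded_iff_forall_norm_le.mp hYcl.isBounded
    have hEy : ∀ k : ℕ, (calEy Acl Bw Ccl Dw Ω n k).Nonempty := by
      intro k
      have hx : (calEx Acl Bw Ω n k).Nonempty :=
        setSum_nonempty _ _ fun i _ => (hΩne i).image _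
      exact Set.add_nonempty.mpr ⟨(hΩne k).image _, hx.image _⟩
    choose e he using hEy
    set g : ℕ → ℝ := fun k => max (CY + ‖e k‖) 0 with hg
    have hgnn : ∀ k, 0 ≤ g k := fun k => le_max_right _ _
    have hgb : ∀ k, ∀ y ∈ Yclset Acl Bw Ccl Dw Ycl Ω n k, ‖y‖ ≤ g k := by
      intro k y hy
      have h1 : y + e k ∈ Ycl := hy (e k) (he k)
      have h2 : ‖y‖ ≤ ‖y + e k‖ + ‖e k‖ := by
        calc ‖y‖ = ‖(y + e k) - e k‖ := by rw [add_sub_cancel_right]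
          _ ≤ ‖y + e k‖ + ‖e k‖ := norm_sub_le _ _
      refine le_trans (le_trans h2 ?_) (le_max_left _ _)
      exact add_le_add_left (hCY _ h1) _
    set t' : Finset ℕ := insert 0 t with ht'
    set M : ℝ := ∑ k ∈ t', g k with hM
    have hMk : ∀ k ∈ t', g k ≤ M := fun k hk =>
      Finset.single_le_sum (fun i _ => hgnn i) hk
    have hMnn : 0 ≤ M := Finset.sum_nonneg fun i _ => hgnn i
    have hball0 : (0 : Fin ny → ℝ) ∈ ε • euclUnitBall ny := by
      refine Set.mem_smul_set.mpr ⟨0, ?_, smul_zero ε⟩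
      show ‖(EuclideanSpace.equiv (Fin ny) ℝ).symm 0‖ ≤ 1
      rw [map_zero, norm_zero]; exact zero_le_one
    have hYtb : ∀ y ∈ Ytil n, ∀ k, y ∈ Yclset Acl Bw Ccl Dw Ycl Ω n k := by
      intro y hy k
      apply hsub k
      simpa using Set.add_mem_add hy hball0
    set R : ℝ := (t.card * (2 * M)) / δ with hR
    have hRnn : 0 ≤ R := div_nonneg (by positivity) hδ.le
    have htend : Tendsto (fun k : ℕ => mnorm (Ccl * Acl ^ k)) atTop (nhds 0) := by
      have hmul : Tendsto (fun k : ℕ => Ccl * Acl ^ k) atTop (nhds 0) := by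
        have hc : Continuous fun Mk : Matrix (Fin nx) (Fin nx) ℝ => Ccl * Mk :=
          Continuous.matrix_mul continuous_const continuous_id
        have := (hc.tendsto (0 : Matrix (Fin nx) (Fin nx) ℝ)).comp hSchur
        rw [Matrix.mul_zero] at this
        exact this
      have h := (mnorm_continuous.tendsto 0).comp hmul
      rwa [mnorm_zero] at h
    set ε' : ℝ := ε / (Real.sqrt ny * R + 1) with hε'def
    have hden : (0:ℝ) < Real.sqrt ny * R + 1 := by positivity
    have hε' : 0 < ε' := div_pos hε hden
    obtain ⟨K, hK⟩ := eventually_atTop.mp (htend.eventually (gt_mem_nhds hε'))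
    refine ⟨max (t'.sup id) K, ?_⟩
    ext p
    simp only [Otilde, Set.mem_setOf_eq]
    constructor
    · rintro ⟨h1, h2⟩; exact ⟨h1, fun k _ => h2 k⟩
    · rintro ⟨h1, h2⟩
      refine ⟨h1, fun k => ?_⟩
      rcases le_or_gt k (max (t'.sup id) K) with hk | hk
      · exact h2 k hk
      set w : Fin ny → ℝ := (Hyinf Acl Bcl Ccl Dcl).mulVec p.1 with hw
      set z : Fin nx → ℝ := p.2 - ((1 - Acl)⁻¹ * Bcl).mulVec p.1 with hz
      have hconstr : ∀ j ∈ t', w + (Ccl * Acl ^ j).mulVec z ∈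
          Yclset Acl Bw Ccl Dw Ycl Ω n j := by
        intro j hj
        rw [hw, hz, ← key_id Acl Bcl Ccl Dcl hInv j p.1 p.2]
        refine h2 j (le_trans ?_ (le_max_left _ _))
        exact Finset.le_sup (f := id) hj
      have hwb : ‖w‖ ≤ M :=
        le_trans (hgb 0 _ (hYtb _ h1 0)) (hMk 0 (Finset.mem_insert_self 0 t))
      have hzb : ‖z‖ ≤ R := by
        have hFz : ∑ j ∈ t, ‖(Ccl * Acl ^ j).mulVec z‖ ≤ t.card * (2 * M) := by
          have hterm : ∀ j ∈ t, ‖(Ccl * Acl ^ j).mulVec z‖ ≤ 2 * M := by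
            intro j hj
            have hjm : ‖w + (Ccl * Acl ^ j).mulVec z‖ ≤ M :=
              le_trans (hgb j _ (hconstr j (Finset.mem_insert_of_mem hj)))
                (hMk j (Finset.mem_insert_of_mem hj))
            calc ‖(Ccl * Acl ^ j).mulVec z‖
                = ‖(w + (Ccl * Acl ^ j).mulVec z) - w‖ := by rw [add_sub_cancel_left]
              _ ≤ ‖w + (Ccl * Acl ^ j).mulVec z‖ + ‖w‖ := norm_sub_le _ _
              _ ≤ M + M := add_le_add hjm hwb
              _ = 2 * M := (two_mul M).symm
          calc ∑ j ∈ t, ‖(Ccl * Acl ^ j).mulVec z‖ ≤ t.card • (2 * M) :=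
              Finset.sum_le_card_nsmul t _ _ hterm
            _ = t.card * (2 * M) := nsmul_eq_mul _ _
        rw [hR, le_div_iff₀ hδ, mul_comm]
        exact le_trans (hδbound z) hFz
      have hkK : K ≤ k := le_of_lt (lt_of_le_of_lt (le_max_right _ _) hk)
      have hmn : mnorm (Ccl * Acl ^ k) < ε' := hK k hkK
      have hnorm2 : ‖(EuclideanSpace.equiv (Fin ny) ℝ).symm
          ((Ccl * Acl ^ k).mulVec z)‖ ≤ ε := by
        calc ‖(EuclideanSpace.equiv (Fin ny) ℝ).symm ((Ccl * Acl ^ k).mulVec z)‖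
            ≤ Real.sqrt ny * ‖(Ccl * Acl ^ k).mulVec z‖ := eucl_norm_le _
          _ ≤ Real.sqrt ny * (mnorm (Ccl * Acl ^ k) * ‖z‖) :=
              mul_le_mul_of_nonneg_left (mulVec_norm_le _ _) (Real.sqrt_nonneg _)
          _ ≤ Real.sqrt ny * (ε' * R) := by
              refine mul_le_mul_of_nonneg_left ?_ (Real.sqrt_nonneg _)
              exact mul_le_mul hmn.le hzb (norm_nonneg _) hε'.le
          _ = ε' * (Real.sqrt ny * R) := by ring
          _ ≤ ε' * (Real.sqrt ny * R + 1) := by nlinarith [hε'.le]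
          _ = ε := by rw [hε'def, div_mul_cancel₀ _ hden.ne']
      have hmem : (Ccl * Acl ^ k).mulVec z ∈ ε • euclUnitBall ny := by
        refine Set.mem_smul_set.mpr
          ⟨ε⁻¹ • ((Ccl * Acl ^ k).mulVec z), ?_, smul_inv_smul₀ hε.ne' _⟩
        show ‖(EuclideanSpace.equiv (Fin ny) ℝ).symm _‖ ≤ 1
        rw [_root_.map_smul, norm_smul, Real.norm_eq_abs, abs_inv, abs_of_pos hε]
        calc ε⁻¹ * ‖(EuclideanSpace.equiv (Fin ny) ℝ).symm ((Ccl * Acl ^ k).mulVec z)‖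
            ≤ ε⁻¹ * ε := mul_le_mul_of_nonneg_left hnorm2 (inv_nonneg.mpr hε.le)
          _ = 1 := inv_mul_cancel₀ hε.ne'
      rw [key_id Acl Bcl Ccl Dcl hInv k p.1 p.2, ← hw, ← hz]
      exact hsub k (Set.add_mem_add h1 hmem)
  · -- some Ω (n + j) is empty: trivial tail constraints
    push_neg at hΩne
    obtain ⟨j, hj⟩ := hΩne
    refine ⟨j, ?_⟩
    ext p
    simp only [Otilde, Set.mem_setOf_eq]
    constructor
    · rintro ⟨h1, h2⟩; exact ⟨h1, fun k _ => h2 k⟩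
    · rintro ⟨h1, h2⟩
      refine ⟨h1, fun k => ?_⟩
      rcases le_or_gt k j with hk | hk
      · exact h2 k hk
      · simp only [Yclset, pDiff, Set.mem_setOf_eq]
        intro v hv
        exfalso
        obtain ⟨a, _, b, hb, rfl⟩ := Set.mem_add.mp hv
        obtain ⟨x, hx, rfl⟩ := hb
        have hne := setSum_nonempty_of_mem (Finset.range k) _ ⟨x, hx⟩ j
          (Finset.mem_range.mpr hk)
        have h' := hne.of_image
        rw [hj] at h'
        exact Set.not_nonempty_empty h'
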